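/- Suppose z, w in the first Weyl algebra A₁ satisfy [z,w] = 1 and z = f(p) for some f ∈ K[X] (i.e., z has degree 0 in q). Then z = αp + β with α ∈ K^* and w = α^{-1}q + g(p) for some g ∈ K[X]; in particular z and w generate A₁ as a K-algebra. -/

import Mathlib

/-- The defining relation of the first Weyl algebra: `p q = q p + 1`,
where `p` and `q` are the images of the generators `0` and `1`. -/
inductive WeylRel (K : Type) [Field K] :
    FreeAlgebra K (Fin 2) → FreeAlgebra K (Fin 2) → Prop
  | rel : WeylRel K (FreeAlgebra.ι K 0 * FreeAlgebra.ι K 1)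
      (FreeAlgebra.ι K 1 * FreeAlgebra.ι K 0 + 1)

/-- The first Weyl algebra `A₁` over `K`. -/
abbrev Weyl (K : Type) [Field K] := RingQuot (WeylRel K)

/-- The generator `p` of `A₁`. -/
noncomputable def Wp (K : Type) [Field K] : Weyl K :=
  RingQuot.mkAlgHom K (WeylRel K) (FreeAlgebra.ι K 0)

/-- The generator `q` of `A₁`. -/
noncomputable def Wq (K : Type) [Field K] : Weyl K :=
  RingQuot.mkAlgHom K (WeylRel K) (FreeAlgebra.ι K 1)

/-- The homogeneous component `D_t = span{p^i q^s : s - i = t}` of `A₁`. -/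
noncomputable def WeylD (K : Type) [Field K] (t : ℤ) : Submodule K (Weyl K) :=
  Submodule.span K {x | ∃ i s : ℕ, (s : ℤ) - (i : ℤ) = t ∧ x = Wp K ^ i * Wq K ^ s}

open Polynomial

variable (K : Type) [Field K]

/-- Derivative as an endomorphism. -/
noncomputable def Dop : Module.End K (Polynomial K) := Polynomial.derivative

/-- Multiplication by X as an endomorphism. -/
noncomputable def Xop : Module.End K (Polynomial K) :=
  LinearMap.mulLeft K (Polynomial.X : Polynomial K)

lemma Dop_Xop : Dop K * Xop K = Xop K * Dop K + 1 := by
  apply LinearMap.ext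
  intro a
  simp [Dop, Xop, Module.End.mul_apply, LinearMap.mulLeft_apply, derivative_mul]
  ring

/-- The representation of the Weyl algebra on `K[X]` with `p ↦ d/dX`, `q ↦ X·`. -/
noncomputable def rep : Weyl K →ₐ[K] Module.End K (Polynomial K) :=
  RingQuot.liftAlgHom K ⟨FreeAlgebra.lift K (fun i : Fin 2 => if i = 0 then Dop K else Xop K),
    by rintro x y ⟨⟩
       simp only [map_mul, map_add, map_one, FreeAlgebra.lift_ι_apply]
       norm_num [Dop_Xop]⟩

lemma rep_p : rep K (Wp K) = Dop K := by
  simp [rep, Wp, RingQuot.liftAlgHom_mkAlgHom_apply, FreeAlgebra.lift_ι_apply]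

lemma rep_q : rep K (Wq K) = Xop K := by
  simp [rep, Wq, RingQuot.liftAlgHom_mkAlgHom_apply, FreeAlgebra.lift_ι_apply]

lemma pq_rel : Wp K * Wq K = Wq K * Wp K + 1 := by
  have h := RingQuot.mkAlgHom_rel K (WeylRel.rel (K := K))
  simpa [Wp, Wq, map_mul, map_add, map_one] using h

lemma p_pow_q (n : ℕ) :
    Wp K ^ n * Wq K = Wq K * Wp K ^ n + (n : K) • Wp K ^ (n - 1) := by
  induction n with
  | zero => simp
  | succ n ih =>
    have h1 : Wp K ^ (n + 1) * Wq K = Wp K * (Wp K ^ n * Wq K) := by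
      rw [pow_succ', mul_assoc]
    rw [h1, ih, mul_add]
    have h2 : Wp K * (Wq K * Wp K ^ n) = Wq K * Wp K ^ (n + 1) + Wp K ^ n := by
      rw [← mul_assoc, pq_rel, add_mul, one_mul, mul_assoc, ← pow_succ']
    have h3 : Wp K * ((n : K) • Wp K ^ (n - 1)) = (n : K) • Wp K ^ n := by
      rcases n with _ | m
      · simp
      · rw [mul_smul_comm, ← pow_succ']
        simp
    rw [h2, h3]
    have : ((n + 1 : ℕ) : K) = (n : K) + 1 := by push_cast; ring
    rw [Nat.add_sub_cancel, this, add_smul, one_smul]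
    abel

lemma comm1 (f : Polynomial K) :
    Polynomial.aeval (Wp K) f * Wq K
      = Wq K * Polynomial.aeval (Wp K) f + Polynomial.aeval (Wp K) (derivative f) := by
  induction f using Polynomial.induction_on' with
  | add p q hp hq =>
    rw [map_add, map_add, add_mul, hp, hq, map_add, mul_add]
    abel
  | monomial n a =>
    rw [aeval_monomial, derivative_monomial, aeval_monomial, mul_assoc, p_pow_q, mul_add]
    simp only [← Algebra.smul_def, mul_smul_comm, smul_smul, mul_comm]

lemma adjoin_pq : Algebra.adjoin K {Wp K, Wq K} = ⊤ := by
  have h2 : Set.range ((RingQuot.mkAlgHom K (WeylRel K)) ∘ (FreeAlgebra.ι K))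
      ⊆ ({Wp K, Wq K} : Set (Weyl K)) := by
    rintro _ ⟨i, rfl⟩
    fin_cases i
    · exact Or.inl rfl
    · exact Or.inr rfl
  rw [eq_top_iff]
  intro x _
  obtain ⟨y, rfl⟩ := RingQuot.mkAlgHom_surjective K (WeylRel K) x
  have hy : y ∈ Algebra.adjoin K (Set.range (FreeAlgebra.ι K)) := by
    rw [FreeAlgebra.adjoin_range_ι]; trivial
  have hmem : RingQuot.mkAlgHom K (WeylRel K) y
      ∈ (Algebra.adjoin K (Set.range (FreeAlgebra.ι K))).map (RingQuot.mkAlgHom K (WeylRel K)) :=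
    ⟨y, hy, rfl⟩
  rw [AlgHom.map_adjoin] at hmem
  refine Algebra.adjoin_mono ?_ hmem
  rw [← Set.range_comp]
  exact h2

lemma p_q_pow (n : ℕ) :
    Wp K * Wq K ^ n = Wq K ^ n * Wp K + (n : K) • Wq K ^ (n - 1) := by
  induction n with
  | zero => simp
  | succ n ih =>
    have h1 : Wp K * Wq K ^ (n + 1) = (Wp K * Wq K ^ n) * Wq K := by
      rw [pow_succ, mul_assoc]
    rw [h1, ih, add_mul, smul_mul_assoc, mul_assoc]
    have h3 : Wq K ^ (n - 1) * Wq K = Wq K ^ n ∨ (n : K) = 0 := by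
      rcases n with _ | m
      · exact Or.inr (by simp)
      · exact Or.inl (by rw [← pow_succ]; norm_num)
    have h2 : Wq K ^ n * (Wp K * Wq K) = Wq K ^ (n+1) * Wp K + Wq K ^ n := by
      rw [pq_rel, mul_add, mul_one, ← mul_assoc, ← pow_succ]
    have h4 : (n : K) • (Wq K ^ (n-1) * Wq K) = (n : K) • Wq K ^ n := by
      rcases h3 with h | h
      · rw [h]
      · rw [h]; simp
    have h5 : ((n + 1 : ℕ) : K) = (n : K) + 1 := by push_cast; ring
    rw [h2, h4, Nat.add_sub_cancel, h5, add_smul, one_smul]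
    abel

/-- Normal form predicate: `x = ∑_{s ≤ m} q^s · g_s(p)`. -/
def NF (m : ℕ) (x : Weyl K) : Prop :=
  ∃ g : ℕ → Polynomial K,
    x = ∑ s ∈ Finset.range (m + 1), Wq K ^ s * Polynomial.aeval (Wp K) (g s)

variable {K}

lemma NF_zero (m : ℕ) : NF K m 0 :=
  ⟨fun _ => 0, by simp⟩

lemma NF_add {m : ℕ} {x y : Weyl K} (hx : NF K m x) (hy : NF K m y) : NF K m (x + y) := by
  obtain ⟨g, rfl⟩ := hx
  obtain ⟨g', rfl⟩ := hy
  exact ⟨g + g', by rw [← Finset.sum_add_distrib]; simp [mul_add]⟩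

lemma NF_smul {m : ℕ} {x : Weyl K} (c : K) (hx : NF K m x) : NF K m (c • x) := by
  obtain ⟨g, rfl⟩ := hx
  refine ⟨fun s => c • g s, ?_⟩
  rw [Finset.smul_sum]
  refine Finset.sum_congr rfl fun s _ => ?_
  rw [map_smul, mul_smul_comm]

lemma NF_mono {m m' : ℕ} {x : Weyl K} (h : m ≤ m') (hx : NF K m x) : NF K m' x := by
  obtain ⟨g, rfl⟩ := hx
  refine ⟨fun s => if s < m + 1 then g s else 0, ?_⟩
  have h1 : ∑ s ∈ Finset.range (m+1), Wq K ^ s * Polynomial.aeval (Wp K) (g s)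
      = ∑ s ∈ Finset.range (m+1), Wq K ^ s
          * Polynomial.aeval (Wp K) (if s < m + 1 then g s else 0) :=
    Finset.sum_congr rfl fun s hs => by
      rw [Finset.mem_range] at hs; simp [hs]
  rw [h1]
  exact Finset.sum_subset (Finset.range_subset_range.2 (by omega)) fun s _ hs => by
    rw [Finset.mem_range] at hs; simp [hs]

lemma NF_single {m s : ℕ} (hs : s ≤ m) (g : Polynomial K) :
    NF K m (Wq K ^ s * Polynomial.aeval (Wp K) g) := by
  refine ⟨fun t => if t = s then g else 0, ?_⟩
  rw [Finset.sum_eq_single s (fun t _ ht => by simp [ht])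
    (fun h => absurd (Finset.mem_range.2 (by omega)) h)]
  simp

lemma NF_sum {m : ℕ} {ι : Type*} (t : Finset ι) (F : ι → Weyl K)
    (h : ∀ i ∈ t, NF K m (F i)) : NF K m (∑ i ∈ t, F i) :=
  Finset.sum_induction F (NF K m) (fun _ _ ha hb => NF_add ha hb) (NF_zero m) h

lemma NF_one : NF K 0 (1 : Weyl K) := by
  simpa using NF_single (le_refl 0) (1 : Polynomial K)

lemma NF_poly (m : ℕ) (g : Polynomial K) : NF K m (Polynomial.aeval (Wp K) g) := by
  simpa using NF_mono (Nat.zero_le m) (NF_single (le_refl 0) g)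

lemma NF_mul_right_poly {m : ℕ} {x : Weyl K} (hx : NF K m x) (h : Polynomial K) :
    NF K m (x * Polynomial.aeval (Wp K) h) := by
  obtain ⟨g, rfl⟩ := hx
  rw [Finset.sum_mul]
  refine NF_sum _ _ fun s hs => ?_
  rw [mul_assoc, ← map_mul]
  exact NF_single (by have := Finset.mem_range.1 hs; omega) _

lemma NF_mul_left_q {m : ℕ} {x : Weyl K} (hx : NF K m x) : NF K (m + 1) (Wq K * x) := by
  obtain ⟨g, rfl⟩ := hx
  rw [Finset.mul_sum]
  refine NF_sum _ _ fun s hs => ?_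
  rw [← mul_assoc, ← pow_succ']
  exact NF_single (by have := Finset.mem_range.1 hs; omega) _

lemma NF_mul_left_p {m : ℕ} {x : Weyl K} (hx : NF K m x) : NF K m (Wp K * x) := by
  obtain ⟨g, rfl⟩ := hx
  rw [Finset.mul_sum]
  refine NF_sum _ _ fun s hs => ?_
  have hs' := Finset.mem_range.1 hs
  rw [← mul_assoc, p_q_pow, add_mul, smul_mul_assoc, mul_assoc]
  refine NF_add ?_ (NF_smul _ (NF_single (by omega) _))
  have : Wq K ^ s * (Wp K * Polynomial.aeval (Wp K) (g s))
      = Wq K ^ s * Polynomial.aeval (Wp K) (Polynomial.X * g s) := by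
    rw [map_mul, aeval_X]
  rw [this]
  exact NF_single (by omega) _

lemma NF_mul_right_q {m : ℕ} {x : Weyl K} (hx : NF K m x) : NF K (m + 1) (x * Wq K) := by
  obtain ⟨g, rfl⟩ := hx
  rw [Finset.sum_mul]
  refine NF_sum _ _ fun s hs => ?_
  have hs' := Finset.mem_range.1 hs
  rw [mul_assoc, comm1, mul_add, ← mul_assoc, ← pow_succ]
  exact NF_add (NF_single (by omega) _) (NF_single (by omega) _)

/-- The key commutation formula with remainder of low `q`-degree. -/
lemma comm_pow (s : ℕ) (f : Polynomial K) :
    ∃ u : Weyl K,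
      Polynomial.aeval (Wp K) f * Wq K ^ s
        = Wq K ^ s * Polynomial.aeval (Wp K) f
          + (s : K) • (Wq K ^ (s - 1) * Polynomial.aeval (Wp K) (derivative f))
          + u
        ∧ ((s ≤ 1 ∧ u = 0) ∨ (2 ≤ s ∧ NF K (s - 2) u)) := by
  induction s generalizing f with
  | zero => exact ⟨0, by simp, Or.inl ⟨by omega, rfl⟩⟩
  | succ s ih =>
    obtain ⟨u, hu, hcase⟩ := ih f
    refine ⟨(s : K) • (Wq K ^ (s - 1) * Polynomial.aeval (Wp K) (derivative (derivative f)))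
      + u * Wq K, ?_, ?_⟩
    · have h1 : Polynomial.aeval (Wp K) f * Wq K ^ (s + 1)
          = (Polynomial.aeval (Wp K) f * Wq K ^ s) * Wq K := by rw [pow_succ, mul_assoc]
      rw [h1, hu, add_mul, add_mul, mul_assoc, comm1, smul_mul_assoc, mul_assoc, comm1]
      rw [mul_add, mul_add, ← mul_assoc, ← pow_succ]
      have h2 : Wq K ^ (s - 1) * (Wq K * Polynomial.aeval (Wp K) (derivative f))
          = Wq K ^ ((s+1) - 1) * Polynomial.aeval (Wp K) (derivative f) ∨ (s : K) = 0 := by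
        rcases s with _ | t
        · exact Or.inr (by simp)
        · refine Or.inl ?_
          rw [← mul_assoc, ← pow_succ]
          norm_num
      have h3 : (s : K) • (Wq K ^ (s - 1) * (Wq K * Polynomial.aeval (Wp K) (derivative f)))
          = (s : K) • (Wq K ^ ((s+1) - 1) * Polynomial.aeval (Wp K) (derivative f)) := by
        rcases h2 with h | h
        · rw [h]
        · rw [h]; simp
      rw [smul_add, h3]
      have h5 : ((s + 1 : ℕ) : K) = (s : K) + 1 := by push_cast; ring
      rw [h5, add_smul, one_smul]
      rw [Nat.add_sub_cancel]
      abel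
    · rcases hcase with ⟨hs, rfl⟩ | ⟨hs, hNF⟩
      · rcases Nat.lt_or_ge s 1 with h | h
        · have : s = 0 := by omega
          subst this
          exact Or.inl ⟨by omega, by simp⟩
        · have : s = 1 := by omega
          subst this
          refine Or.inr ⟨by omega, ?_⟩
          simpa using NF_add (NF_smul (1 : K)
            (NF_single (le_refl 0) (derivative (derivative f)))) (NF_zero 0)
      · refine Or.inr ⟨by omega, ?_⟩
        refine NF_add (NF_smul _ (NF_mono (by omega) (NF_single (le_refl _) _))) ?_
        have := NF_mul_right_q hNF
        exact NF_mono (by omega) this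

variable (K) in
/-- The subalgebra of elements preserving the property of having a normal form. -/
def goodSet : Subalgebra K (Weyl K) where
  carrier := {a | ∀ x : Weyl K, (∃ m, NF K m x) → ∃ m', NF K m' (a * x)}
  mul_mem' := fun {a b} ha hb x hx => by rw [mul_assoc]; exact ha _ (hb _ hx)
  one_mem' := fun x hx => by rw [one_mul]; exact hx
  add_mem' := fun {a b} ha hb x hx => by
    obtain ⟨m1, h1⟩ := ha x hx
    obtain ⟨m2, h2⟩ := hb x hx
    exact ⟨max m1 m2, by
      rw [add_mul]
      exact NF_add (NF_mono (le_max_left _ _) h1) (NF_mono (le_max_right _ _) h2)⟩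
  zero_mem' := fun x _ => ⟨0, by rw [zero_mul]; exact NF_zero 0⟩
  algebraMap_mem' := fun c x hx => by
    obtain ⟨m, h⟩ := hx
    exact ⟨m, by rw [← Algebra.smul_def]; exact NF_smul c h⟩

lemma exists_NF (x : Weyl K) : ∃ m, NF K m x := by
  have hle : Algebra.adjoin K {Wp K, Wq K} ≤ goodSet K := by
    refine Algebra.adjoin_le ?_
    intro a ha
    rcases ha with rfl | rfl
    · exact fun y hy => by
        obtain ⟨m, h⟩ := hy
        exact ⟨m, NF_mul_left_p h⟩
    · exact fun y hy => by
        obtain ⟨m, h⟩ := hy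
        exact ⟨m + 1, NF_mul_left_q h⟩
  have hx : x ∈ goodSet K := by
    rw [adjoin_pq] at hle
    exact hle trivial
  simpa using hx 1 ⟨0, NF_one⟩

lemma Xop_pow_apply (s : ℕ) (a : Polynomial K) :
    (Xop K ^ s) a = Polynomial.X ^ s * a := by
  rw [Xop, LinearMap.pow_mulLeft, LinearMap.mulLeft_apply]

lemma Dop_pow_one {k : ℕ} (hk : 0 < k) : (Dop K ^ k) (1 : Polynomial K) = 0 := by
  rw [Dop, Module.End.pow_apply, Polynomial.iterate_derivative_one hk]

lemma aevalD_apply_one (g : Polynomial K) :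
    (Polynomial.aeval (Dop K) g) (1 : Polynomial K) = Polynomial.C (g.coeff 0) := by
  rw [Polynomial.aeval_eq_sum_range, LinearMap.sum_apply]
  rw [Finset.sum_eq_single 0]
  · simp [Polynomial.smul_C, Polynomial.smul_eq_C_mul]
  · intro i _ hi
    rw [LinearMap.smul_apply, Dop_pow_one (Nat.pos_of_ne_zero hi), smul_zero]
  · intro h
    exact absurd (Finset.mem_range.2 (by omega)) h

variable [CharZero K]

lemma Dop_surjective (a : Polynomial K) : ∃ b, Dop K b = a := by
  induction a using Polynomial.induction_on' with
  | add p q hp hq =>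
    obtain ⟨b1, h1⟩ := hp
    obtain ⟨b2, h2⟩ := hq
    exact ⟨b1 + b2, by rw [map_add, h1, h2]⟩
  | monomial n c =>
    refine ⟨Polynomial.C (c / (n + 1)) * Polynomial.X ^ (n + 1), ?_⟩
    show derivative _ = _
    rw [Polynomial.derivative_C_mul_X_pow]
    rw [Nat.add_sub_cancel, ← Polynomial.C_mul_X_pow_eq_monomial]
    congr 1
    rw [Polynomial.C_inj]
    push_cast
    exact div_mul_cancel₀ c (Nat.cast_add_one_ne_zero n)

lemma coeff0_zero {M : ℕ} {g : ℕ → Polynomial K}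
    (h : (∑ s ∈ Finset.range (M + 1), Xop K ^ s * Polynomial.aeval (Dop K) (g s)) = 0) :
    ∀ s ≤ M, (g s).coeff 0 = 0 := by
  have h1 : (∑ s ∈ Finset.range (M + 1),
      Xop K ^ s * Polynomial.aeval (Dop K) (g s)) (1 : Polynomial K) = 0 := by
    rw [h]; rfl
  rw [LinearMap.sum_apply] at h1
  have h2 : ∀ s ∈ Finset.range (M + 1),
      (Xop K ^ s * Polynomial.aeval (Dop K) (g s)) (1 : Polynomial K)
        = Polynomial.C ((g s).coeff 0) * Polynomial.X ^ s := by
    intro s _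
    rw [Module.End.mul_apply, aevalD_apply_one, Xop_pow_apply, mul_comm]
  rw [Finset.sum_congr rfl h2] at h1
  intro t ht
  have h3 := congrArg (fun p => Polynomial.coeff p t) h1
  simp only [Polynomial.finset_sum_coeff, Polynomial.coeff_C_mul, Polynomial.coeff_X_pow,
    Polynomial.coeff_zero, mul_ite, mul_one, mul_zero] at h3
  rw [Finset.sum_ite_eq (Finset.range (M + 1)) t (fun s => (g s).coeff 0)] at h3
  rwa [if_pos (Finset.mem_range.2 (by omega))] at h3

lemma end_unique (M : ℕ) (n : ℕ) : ∀ (g : ℕ → Polynomial K),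
    (∀ s, (g s).natDegree ≤ n) →
    (∑ s ∈ Finset.range (M + 1), Xop K ^ s * Polynomial.aeval (Dop K) (g s)) = 0 →
    ∀ s ≤ M, g s = 0 := by
  induction n with
  | zero =>
    intro g hdeg hsum s hs
    have hc := coeff0_zero hsum s hs
    rw [Polynomial.eq_C_of_natDegree_le_zero (hdeg s), hc, map_zero]
  | succ n ih =>
    intro g hdeg hsum s hs
    have hc := coeff0_zero hsum
    have hgs : ∀ t ≤ M, g t = Polynomial.divX (g t) * Polynomial.X := by
      intro t ht
      conv_lhs => rw [← Polynomial.divX_mul_X_add (g t)]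
      rw [hc t ht, map_zero, add_zero]
    have hsum' : (∑ s ∈ Finset.range (M + 1),
        Xop K ^ s * Polynomial.aeval (Dop K) (Polynomial.divX (g s))) * Dop K = 0 := by
      rw [Finset.sum_mul, ← hsum]
      refine Finset.sum_congr rfl fun t ht => ?_
      rw [mul_assoc]
      conv_rhs => rw [hgs t (by have := Finset.mem_range.1 ht; omega)]
      rw [map_mul, Polynomial.aeval_X]
    have hT' : (∑ s ∈ Finset.range (M + 1),
        Xop K ^ s * Polynomial.aeval (Dop K) (Polynomial.divX (g s))) = 0 := by
      apply LinearMap.ext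
      intro a
      obtain ⟨b, rfl⟩ := Dop_surjective a
      have hb := LinearMap.ext_iff.1 hsum' b
      rw [Module.End.mul_apply] at hb
      simpa using hb
    have hdiv := ih (fun s => Polynomial.divX (g s))
      (fun s => by
        show (Polynomial.divX (g s)).natDegree ≤ n
        have h1 := hdeg s
        have h2 := Polynomial.natDegree_divX_eq_natDegree_tsub_one (p := g s)
        omega)
      hT' s hs
    rw [hgs s hs, show Polynomial.divX (g s) = 0 from hdiv, zero_mul]

lemma rep_sum (M : ℕ) (g : ℕ → Polynomial K) :
    rep K (∑ s ∈ Finset.range (M + 1), Wq K ^ s * Polynomial.aeval (Wp K) (g s))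
      = ∑ s ∈ Finset.range (M + 1), Xop K ^ s * Polynomial.aeval (Dop K) (g s) := by
  rw [map_sum]
  refine Finset.sum_congr rfl fun s _ => ?_
  rw [map_mul, map_pow, rep_q, ← Polynomial.aeval_algHom_apply, rep_p]

lemma NF_unique {M : ℕ} {g : ℕ → Polynomial K}
    (h : ∑ s ∈ Finset.range (M + 1), Wq K ^ s * Polynomial.aeval (Wp K) (g s) = 0) :
    ∀ s ≤ M, g s = 0 := by
  have hsame : ∑ s ∈ Finset.range (M + 1),
      Wq K ^ s * Polynomial.aeval (Wp K) (if s ≤ M then g s else 0)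
      = ∑ s ∈ Finset.range (M + 1), Wq K ^ s * Polynomial.aeval (Wp K) (g s) :=
    Finset.sum_congr rfl fun s hs => by
      rw [if_pos (by have := Finset.mem_range.1 hs; omega)]
  have h0 : rep K (∑ s ∈ Finset.range (M + 1),
      Wq K ^ s * Polynomial.aeval (Wp K) (if s ≤ M then g s else 0)) = 0 := by
    rw [hsame, h, map_zero]
  have h0' := rep_sum M (fun s => if s ≤ M then g s else 0)
  have hEnd := h0'.symm.trans h0
  have hb : ∀ s, (if s ≤ M then g s else (0 : Polynomial K)).natDegree
      ≤ (Finset.range (M + 1)).sup (fun s => (g s).natDegree) := by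
    intro s
    by_cases hsM : s ≤ M
    · rw [if_pos hsM]
      exact Finset.le_sup (f := fun s => (g s).natDegree) (Finset.mem_range.2 (by omega))
    · rw [if_neg hsM]
      simp
  have hall := end_unique M ((Finset.range (M + 1)).sup (fun s => (g s).natDegree))
    (fun s => if s ≤ M then g s else 0) hb hEnd
  intro s hs
  simpa [hs] using hall s hs

lemma aeval_Wp_eq_zero {f : Polynomial K} (hf : Polynomial.aeval (Wp K) f = 0) : f = 0 := by
  have h : ∑ s ∈ Finset.range (0 + 1), Wq K ^ s * Polynomial.aeval (Wp K)
      ((fun _ => f) s) = 0 := by simpa using hf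
  simpa using NF_unique h 0 (le_refl 0)

lemma weyl_one_ne_zero : (1 : Weyl K) ≠ 0 := by
  intro h
  have : (1 : Polynomial K) = 0 := aeval_Wp_eq_zero (by rw [map_one, h])
  exact one_ne_zero this

lemma comm_term (f : Polynomial K) (s : ℕ) (h : Polynomial K) :
    ∃ u : Weyl K,
      Polynomial.aeval (Wp K) f * (Wq K ^ s * Polynomial.aeval (Wp K) h)
          - (Wq K ^ s * Polynomial.aeval (Wp K) h) * Polynomial.aeval (Wp K) f
        = (s : K) • (Wq K ^ (s - 1) * Polynomial.aeval (Wp K) (derivative f * h)) + u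
        ∧ ((s ≤ 1 ∧ u = 0) ∨ (2 ≤ s ∧ NF K (s - 2) u)) := by
  obtain ⟨u, hu, hcase⟩ := comm_pow (K := K) s f
  refine ⟨u * Polynomial.aeval (Wp K) h, ?_, ?_⟩
  · have h1 : Polynomial.aeval (Wp K) f * (Wq K ^ s * Polynomial.aeval (Wp K) h)
        = (Polynomial.aeval (Wp K) f * Wq K ^ s) * Polynomial.aeval (Wp K) h := by
      rw [mul_assoc]
    rw [h1, hu, add_mul, add_mul, smul_mul_assoc, mul_assoc, mul_assoc, ← map_mul, ← map_mul]
    have h2 : (Wq K ^ s * Polynomial.aeval (Wp K) h) * Polynomial.aeval (Wp K) f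
        = Wq K ^ s * Polynomial.aeval (Wp K) (f * h) := by
      rw [mul_assoc, ← map_mul, mul_comm h f]
    rw [h2]
    abel
  · rcases hcase with ⟨h1, rfl⟩ | ⟨h1, h2⟩
    · exact Or.inl ⟨h1, by rw [zero_mul]⟩
    · exact Or.inr ⟨h1, NF_mul_right_poly h2 h⟩

lemma main_aux (f : Polynomial K) (hf' : derivative f ≠ 0) :
    ∀ N : ℕ, ∀ g : ℕ → Polynomial K, ∀ w : Weyl K,
      w = ∑ s ∈ Finset.range (N + 1), Wq K ^ s * Polynomial.aeval (Wp K) (g s) →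
      Polynomial.aeval (Wp K) f * w - w * Polynomial.aeval (Wp K) f = 1 →
      ∃ (α β : K) (g0 : Polynomial K), α ≠ 0 ∧
        f = Polynomial.C α * Polynomial.X + Polynomial.C β ∧
        w = α⁻¹ • Wq K + Polynomial.aeval (Wp K) g0 := by
  intro N
  induction N using Nat.strong_induction_on with
  | _ N ih =>
    intro g w hw hcomm
    choose u hu hucase using fun s => comm_term f s (g s)
    have hsum : Polynomial.aeval (Wp K) f * w - w * Polynomial.aeval (Wp K) f
        = ∑ s ∈ Finset.range (N + 1),
            ((s : K) • (Wq K ^ (s - 1) * Polynomial.aeval (Wp K) (derivative f * g s)) + u s) := by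
      rw [hw, Finset.mul_sum, Finset.sum_mul, ← Finset.sum_sub_distrib]
      exact Finset.sum_congr rfl fun s _ => hu s
    match N with
    | 0 =>
      exfalso
      rw [hsum] at hcomm
      have h0 : u 0 = 0 := by
        rcases hucase 0 with ⟨_, h⟩ | ⟨h, _⟩
        · exact h
        · omega
      rw [Finset.sum_range_one, h0] at hcomm
      simp at hcomm
      exact weyl_one_ne_zero hcomm.symm
    | 1 =>
      -- commutator = aeval (f' * g 1)
      have h0 : u 0 = 0 := by
        rcases hucase 0 with ⟨_, h⟩ | ⟨h, _⟩
        · exact h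
        · omega
      have h1 : u 1 = 0 := by
        rcases hucase 1 with ⟨_, h⟩ | ⟨h, _⟩
        · exact h
        · omega
      rw [hsum] at hcomm
      rw [Finset.sum_range_succ, Finset.sum_range_one, h0, h1] at hcomm
      simp only [Nat.cast_zero, zero_smul, zero_add, add_zero, Nat.cast_one, one_smul,
        pow_zero, one_mul, pow_one] at hcomm
      simp only [Nat.sub_self, pow_zero, one_mul] at hcomm
      have heq : Polynomial.aeval (Wp K) (derivative f * g 1 - 1) = 0 := by
        rw [map_sub, map_one, hcomm, sub_self]
      have hfg : derivative f * g 1 = 1 := by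
        have := aeval_Wp_eq_zero heq
        linear_combination this
      -- derivative f is a unit
      have hunit : IsUnit (derivative f) := IsUnit.of_mul_eq_one _ hfg
      have hdeg0 : (derivative f).natDegree = 0 := Polynomial.natDegree_eq_zero_of_isUnit hunit
      set α := (derivative f).coeff 0 with hα
      have hfC : derivative f = Polynomial.C α := Polynomial.eq_C_of_natDegree_eq_zero hdeg0
      have hαne : α ≠ 0 := by
        intro h
        rw [h, map_zero] at hfC
        exact hf' hfC
      -- g 1 = C α⁻¹
      have hg1 : g 1 = Polynomial.C α⁻¹ := by
        have h2 : Polynomial.C α * g 1 = 1 := by rw [← hfC]; exact hfg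
        have h3 : Polynomial.C α⁻¹ * (Polynomial.C α * g 1) = Polynomial.C α⁻¹ := by
          rw [h2, mul_one]
        rw [← mul_assoc, ← Polynomial.C_mul, inv_mul_cancel₀ hαne, Polynomial.C_1, one_mul] at h3
        exact h3
      -- natDegree f ≤ 1
      have hdeg1 : f.natDegree ≤ 1 := by
        rw [Polynomial.natDegree_le_iff_coeff_eq_zero]
        intro m hm
        obtain ⟨k, rfl⟩ : ∃ k, m = k + 2 := ⟨m - 2, by omega⟩
        have hco : (derivative f).coeff (k + 1) = 0 := by
          rw [hfC, Polynomial.coeff_C]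
          simp
        rw [Polynomial.coeff_derivative] at hco
        have hne : ((k + 1 : ℕ) : K) + 1 ≠ 0 := Nat.cast_add_one_ne_zero (k + 1)
        have := mul_eq_zero.1 hco
        rcases this with h | h
        · exact h
        · exact absurd h hne
      have hcoeff1 : f.coeff 1 = α := by
        have := Polynomial.coeff_derivative f 0
        rw [hfC, Polynomial.coeff_C_zero] at this
        simpa using this.symm
      refine ⟨α, f.coeff 0, g 0, hαne, ?_, ?_⟩
      · conv_lhs => rw [Polynomial.eq_X_add_C_of_natDegree_le_one hdeg1]
        rw [hcoeff1]
      · rw [hw, Finset.sum_range_succ, Finset.sum_range_one, pow_zero, one_mul, pow_one, hg1]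
        rw [Polynomial.aeval_C, ← Algebra.commutes, Algebra.smul_def]
        exact add_comm _ _
    | (M + 2) =>
      -- top coefficient must vanish, recurse
      have hUNF : NF K M (∑ s ∈ Finset.range (M + 3), u s) := by
        refine NF_sum _ _ fun s hs => ?_
        rcases hucase s with ⟨_, h⟩ | ⟨h2, h⟩
        · rw [h]; exact NF_zero M
        · exact NF_mono (by have := Finset.mem_range.1 hs; omega) h
      obtain ⟨v, hv⟩ := hUNF
      -- rewrite commutator as a normal form over range (M+2)
      have hT1 : ∀ s : ℕ,
          ((s + 1 : ℕ) : K) • (Wq K ^ s * Polynomial.aeval (Wp K) (derivative f * g (s + 1)))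
            = Wq K ^ s * Polynomial.aeval (Wp K)
                (((s + 1 : ℕ) : K) • (derivative f * g (s + 1))) := by
        intro s
        rw [map_smul, mul_smul_comm]
      have hsum2 : Polynomial.aeval (Wp K) f * w - w * Polynomial.aeval (Wp K) f
          = ∑ t ∈ Finset.range (M + 2), Wq K ^ t * Polynomial.aeval (Wp K)
              (((t + 1 : ℕ) : K) • (derivative f * g (t + 1))
                + (if t ≤ M then v t else 0)) := by
        rw [hsum, Finset.sum_add_distrib, Finset.sum_range_succ']
        simp only [Nat.cast_zero, zero_smul, add_zero, Nat.add_sub_cancel]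
        rw [hv]
        have hpad : ∑ t ∈ Finset.range (M + 1), Wq K ^ t * Polynomial.aeval (Wp K) (v t)
            = ∑ t ∈ Finset.range (M + 2), Wq K ^ t
                * Polynomial.aeval (Wp K) (if t ≤ M then v t else 0) := by
          rw [Finset.sum_congr rfl (fun t ht => ?_)]
          · exact Finset.sum_subset (Finset.range_subset_range.2 (by omega)) fun t _ hnot => by
              rw [Finset.mem_range] at hnot
              rw [if_neg (by omega)]
              simp
          · rw [if_pos (by have := Finset.mem_range.1 ht; omega)]
        rw [hpad, ← Finset.sum_add_distrib]
        refine Finset.sum_congr rfl fun t _ => ?_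
        rw [hT1 t, map_add, mul_add]
      -- compare with 1
      have hone : (∑ t ∈ Finset.range (M + 2), Wq K ^ t
          * Polynomial.aeval (Wp K) (if t = 0 then (1 : Polynomial K) else 0)) = 1 := by
        rw [Finset.sum_eq_single 0]
        · simp
        · intro t _ ht
          rw [if_neg ht]
          simp
        · intro h
          exact absurd (Finset.mem_range.2 (by omega)) h
      have hzero : ∑ t ∈ Finset.range (M + 2), Wq K ^ t * Polynomial.aeval (Wp K)
          ((((t + 1 : ℕ) : K) • (derivative f * g (t + 1))
            + (if t ≤ M then v t else 0)) - (if t = 0 then 1 else 0)) = 0 := by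
        rw [show (0 : Weyl K) = 1 - 1 from (sub_self 1).symm]
        conv_lhs =>
          rw [Finset.sum_congr rfl (fun t _ => by
            rw [map_sub, mul_sub] : ∀ t ∈ Finset.range (M+2), _ = _)]
        rw [Finset.sum_sub_distrib, ← hsum2, hcomm, hone]
      have htop := NF_unique hzero (M + 1) (le_refl _)
      rw [if_neg (by omega : ¬ (M + 1 ≤ M)), if_neg (by omega : ¬ (M + 1 = 0)),
        add_zero, sub_zero] at htop
      have hgN : g (M + 2) = 0 := by
        have hcast : ((M + 2 : ℕ) : K) ≠ 0 := Nat.cast_ne_zero.2 (by omega)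
        have h2 := smul_eq_zero.1 htop
        rcases h2 with h | h
        · exact absurd h hcast
        · rcases mul_eq_zero.1 h with h | h
          · exact absurd h hf'
          · exact h
      -- drop the top term and recurse
      have hw' : w = ∑ s ∈ Finset.range (M + 2), Wq K ^ s * Polynomial.aeval (Wp K) (g s) := by
        rw [hw, Finset.sum_range_succ, hgN]
        simp
      exact ih (M + 1) (by omega) g w hw' hcomm

lemma derivative_eq_zero_imp {f : Polynomial K} (h : derivative f = 0) :
    f = Polynomial.C (f.coeff 0) := by
  have hdeg : f.natDegree ≤ 0 := by
    rw [Polynomial.natDegree_le_iff_coeff_eq_zero]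
    intro m hm
    obtain ⟨k, rfl⟩ : ∃ k, m = k + 1 := ⟨m - 1, by omega⟩
    have hco : (derivative f).coeff k = 0 := by rw [h]; simp
    rw [Polynomial.coeff_derivative] at hco
    rcases mul_eq_zero.1 hco with h' | h'
    · exact h'
    · exact absurd h' (Nat.cast_add_one_ne_zero k)
  exact Polynomial.eq_C_of_natDegree_le_zero hdeg

theorem weyl_degree_zero_in_q' (K : Type) [Field K] [CharZero K]
    (z w : Weyl K) (hc : z * w - w * z = 1)
    (f : Polynomial K) (hz : z = Polynomial.aeval (Wp K) f) :
    (∃ (α β : K) (g : Polynomial K), α ≠ 0 ∧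
        z = α • Wp K + β • (1 : Weyl K) ∧
        w = α⁻¹ • Wq K + Polynomial.aeval (Wp K) g) ∧
      Algebra.adjoin K {z, w} = (⊤ : Subalgebra K (Weyl K)) := by
  classical
  by_cases hf' : derivative f = 0
  · exfalso
    have hfC := derivative_eq_zero_imp hf'
    have hzc : z = algebraMap K (Weyl K) (f.coeff 0) := by
      rw [hz, hfC, Polynomial.aeval_C]
      simp
    rw [hzc, Algebra.commutes, sub_self] at hc
    exact weyl_one_ne_zero hc.symm
  · obtain ⟨m, g, hw⟩ := exists_NF w
    have hcomm : Polynomial.aeval (Wp K) f * w - w * Polynomial.aeval (Wp K) f = 1 := by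
      rw [← hz]; exact hc
    obtain ⟨α, β, g0, hα, hf, hwf⟩ := main_aux f hf' m g w hw hcomm
    have hz' : z = α • Wp K + β • (1 : Weyl K) := by
      rw [hz, hf, map_add, map_mul, Polynomial.aeval_C, Polynomial.aeval_X, Polynomial.aeval_C,
        Algebra.smul_def, Algebra.smul_def, mul_one]
    refine ⟨⟨α, β, g0, hα, hz', hwf⟩, ?_⟩
    set S := Algebra.adjoin K ({z, w} : Set (Weyl K)) with hS
    have hzS : z ∈ S := Algebra.subset_adjoin (Set.mem_insert _ _)
    have hwS : w ∈ S := Algebra.subset_adjoin (Set.mem_insert_of_mem _ rfl)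
    have hpS : Wp K ∈ S := by
      have hp_eq : Wp K = α⁻¹ • (z - β • (1 : Weyl K)) := by
        rw [hz', add_sub_cancel_right, smul_smul, inv_mul_cancel₀ hα, one_smul]
      rw [hp_eq]
      exact S.smul_mem (S.sub_mem hzS (S.smul_mem S.one_mem β)) α⁻¹
    have hgS : Polynomial.aeval (Wp K) g0 ∈ S := by
      have h1 : Polynomial.aeval (Wp K) g0 ∈ Algebra.adjoin K ({Wp K} : Set (Weyl K)) := by
        rw [Algebra.adjoin_singleton_eq_range_aeval]
        exact ⟨g0, rfl⟩
      exact Algebra.adjoin_le (Set.singleton_subset_iff.2 hpS) h1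
    have hqS : Wq K ∈ S := by
      have hq_eq : Wq K = α • (w - Polynomial.aeval (Wp K) g0) := by
        rw [hwf, add_sub_cancel_right, smul_smul, mul_inv_cancel₀ hα, one_smul]
      rw [hq_eq]
      exact S.smul_mem (S.sub_mem hwS hgS) α
    rw [eq_top_iff, ← adjoin_pq K]
    refine Algebra.adjoin_le ?_
    rintro x (rfl | rfl)
    · exact hpS
    · exact hqS

/-- If `[z,w] = 1` and `z = f(p)` for some `f ∈ K[X]`, then `z = αp + β` with
`α ∈ K^*` and `w = α⁻¹ q + g(p)` for some `g ∈ K[X]`; in particular `z` and `w`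
generate `A₁`. -/
theorem weyl_degree_zero_in_q (K : Type) [Field K] [CharZero K]
    (z w : Weyl K) (hc : z * w - w * z = 1)
    (f : Polynomial K) (hz : z = Polynomial.aeval (Wp K) f) :
    (∃ (α β : K) (g : Polynomial K), α ≠ 0 ∧
        z = α • Wp K + β • (1 : Weyl K) ∧
        w = α⁻¹ • Wq K + Polynomial.aeval (Wp K) g) ∧
      Algebra.adjoin K {z, w} = (⊤ : Subalgebra K (Weyl K)) := by
  exact weyl_degree_zero_in_q' K z w hc f hz
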